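/- Let Σ ≥ 1 be a natural number and let x, y be unit vectors in a finite-dimensional real inner product space with x ≠ −y. Then ∫_0^∞ ∫_0^∞ λ^{Σ−1} μ^{Σ−1} e^{−‖λx + μy‖²/2} dλ dμ = 2^{Σ−1} Γ(Σ) · ∫_0^{π/2} (cos θ · sin θ)^{Σ−1} / ‖cos θ · x + sin θ · y‖^{2Σ} dθ, where Γ is the real Gamma function. (The paper applies this with x, y unit-norm rank-1 tensors and Σ the dimension of the Segre manifold.) -/

import Mathlib

open MeasureTheory Real
open Set

private lemma aux_norm_ne_zero {E : Type*} [NormedAddCommGroup E] [InnerProductSpace ℝ E]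
    (x y : E) (hx : ‖x‖ = 1) (hy : ‖y‖ = 1) (hxy : x ≠ -y)
    (θ : ℝ) (hc : 0 ≤ Real.cos θ) (hs : 0 ≤ Real.sin θ) :
    Real.cos θ • x + Real.sin θ • y ≠ 0 := by
  intro h
  have h1 : Real.cos θ • x = -(Real.sin θ • y) := by
    rw [← eq_neg_iff_add_eq_zero] at h; exact h
  have h2 : Real.cos θ = Real.sin θ := by
    have := congrArg norm h1
    rwa [norm_neg, norm_smul, norm_smul, hx, hy, mul_one, mul_one,
      Real.norm_eq_abs, Real.norm_eq_abs, abs_of_nonneg hc, abs_of_nonneg hs] at this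
  have h3 : Real.cos θ ≠ 0 := by
    intro h0
    have := Real.sin_sq_add_cos_sq θ
    rw [h0, ← h2, h0] at this; norm_num at this
  apply hxy
  have h4 : Real.cos θ • (x + y) = 0 := by
    rw [smul_add, h2]
    rw [h2] at h
    exact h
  have h5 : x + y = 0 := by
    rcases smul_eq_zero.mp h4 with h' | h'
    · exact absurd h' h3
    · exact h'
  rw [eq_neg_iff_add_eq_zero]
  exact h5

private lemma aux_radial (S : ℕ) (hS : 1 ≤ S) (b : ℝ) (hb : 0 < b) :
    ∫ r in Ioi (0:ℝ), r ^ (2*S-1) * Real.exp (-b * r^2)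
      = b ^ (-(S:ℝ)) * (1/2) * Real.Gamma S := by
  have hS1 : (1:ℝ) ≤ (S:ℝ) := by exact_mod_cast hS
  have hq : (-1:ℝ) < 2*(S:ℝ) - 1 := by linarith
  have h1 := integral_rpow_mul_exp_neg_mul_rpow (p := 2) (q := 2*(S:ℝ)-1) two_pos hq hb
  have hcast : ((2*S-1 : ℕ) : ℝ) = 2*(S:ℝ) - 1 := by
    have : 1 ≤ 2*S := by omega
    push_cast [this]
    ring
  rw [show (2*(S:ℝ)-1+1)/2 = (S:ℝ) by ring, show -(2*(S:ℝ)-1+1)/2 = -(S:ℝ) by ring] at h1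
  rw [← h1]
  refine setIntegral_congr_fun measurableSet_Ioi (fun r hr => ?_)
  rw [← Real.rpow_natCast r (2*S-1), hcast]
  congr 2
  rw [show (2:ℝ) = ((2:ℕ):ℝ) by norm_num, Real.rpow_natCast]

private lemma aux_key {E : Type*} [NormedAddCommGroup E] [InnerProductSpace ℝ E]
    (S : ℕ) (hS : 1 ≤ S) (x y : E)
    (θ : ℝ) (hc : 0 < Real.cos θ) (hsn : 0 < Real.sin θ)
    (hu : Real.cos θ • x + Real.sin θ • y ≠ 0) :
    (∫⁻ r in Ioi (0:ℝ), ENNReal.ofReal (r * ((r * Real.cos θ) ^ (S-1) * (r * Real.sin θ) ^ (S-1) *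
        Real.exp (-‖(r * Real.cos θ) • x + (r * Real.sin θ) • y‖^2/2))))
      = ENNReal.ofReal ((2:ℝ)^(S-1) * Real.Gamma S) *
        ENNReal.ofReal ((Real.cos θ * Real.sin θ)^(S-1) /
          ‖Real.cos θ • x + Real.sin θ • y‖ ^ (2*S)) := by
  have hrad : ∀ b : ℝ, 0 < b → ∫ r in Ioi (0:ℝ), r ^ (2*S-1) * Real.exp (-b * r^2)
      = b ^ (-(S:ℝ)) * (1/2) * Real.Gamma S := aux_radial S hS
  set u := Real.cos θ • x + Real.sin θ • y with hudef
  have hun : 0 < ‖u‖ := norm_pos_iff.mpr hu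
  set b : ℝ := ‖u‖^2/2 with hbdef
  have hb : 0 < b := by positivity
  have hpt : ∀ r ∈ Ioi (0:ℝ),
      ENNReal.ofReal (r * ((r * Real.cos θ) ^ (S-1) * (r * Real.sin θ) ^ (S-1) *
        Real.exp (-‖(r * Real.cos θ) • x + (r * Real.sin θ) • y‖^2/2)))
      = ENNReal.ofReal ((Real.cos θ * Real.sin θ)^(S-1)) *
        ENNReal.ofReal (r ^ (2*S-1) * Real.exp (-b * r^2)) := by
    intro r hr
    rw [← ENNReal.ofReal_mul (by positivity)]
    congr 1
    have hsm : (r * Real.cos θ) • x + (r * Real.sin θ) • y = r • u := by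
      rw [hudef, smul_add, mul_smul, mul_smul]
    rw [hsm, norm_smul, Real.norm_eq_abs, abs_of_pos hr]
    rw [show -(r * ‖u‖)^2/2 = -b * r^2 by rw [hbdef]; ring]
    obtain ⟨T, rfl⟩ : ∃ T, S = T + 1 := ⟨S - 1, by omega⟩
    simp only [Nat.add_sub_cancel, show 2*(T+1)-1 = 2*T+1 from by omega]
    ring
  rw [setLIntegral_congr_fun measurableSet_Ioi hpt]
  rw [lintegral_const_mul' _ _ ENNReal.ofReal_ne_top]
  have hint : IntegrableOn (fun r : ℝ => r ^ (2*S-1) * Real.exp (-b * r^2)) (Ioi 0) := by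
    have hcast : (0:ℝ) ≤ ((2*S-1:ℕ):ℝ) := Nat.cast_nonneg _
    have h0 := integrableOn_rpow_mul_exp_neg_mul_sq hb
      (s := ((2*S-1 : ℕ) : ℝ)) (by linarith)
    refine h0.congr_fun (fun r hr => ?_) measurableSet_Ioi
    simp only [Real.rpow_natCast]
  rw [← ofReal_integral_eq_lintegral_ofReal hint
    (ae_restrict_of_forall_mem measurableSet_Ioi
      (fun r hr => by
        have hr' : (0:ℝ) < r := hr
        simp only [Pi.zero_apply]
        positivity))]
  have hbS : b ^ (-(S:ℝ)) = 2^S / ‖u‖^(2*S) := by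
    rw [Real.rpow_neg hb.le, Real.rpow_natCast, hbdef, div_pow, ← pow_mul]
    rw [inv_div]
  have h2 : (2:ℝ)^S = 2 * 2^(S-1) := by
    conv_lhs => rw [show S = (S-1) + 1 from by omega]
    ring
  have hne : ‖u‖^(2*S) ≠ 0 := by positivity
  have hval : (Real.cos θ * Real.sin θ)^(S-1) * (b ^ (-(S:ℝ)) * (1/2) * Real.Gamma S)
      = (2:ℝ)^(S-1) * Real.Gamma S *
        ((Real.cos θ * Real.sin θ)^(S-1) / ‖u‖^(2*S)) := by
    rw [hbS, h2]
    field_simp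
  have hG : (0:ℝ) ≤ (2:ℝ)^(S-1) * Real.Gamma S := by
    have := Real.Gamma_pos_of_pos (show (0:ℝ) < S by exact_mod_cast hS.trans_lt' zero_lt_one)
    positivity
  rw [hrad b hb, ← ENNReal.ofReal_mul (by positivity), hval, ENNReal.ofReal_mul hG]

private lemma aux_image :
    Ioi (0:ℝ) ×ˢ Ioi (0:ℝ) = polarCoord.symm '' (Ioi (0:ℝ) ×ˢ Ioo (0:ℝ) (π/2)) := by
  ext ⟨a, b⟩
  simp only [mem_prod, mem_Ioi, mem_Ioo, mem_image, Prod.exists]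
  constructor
  · rintro ⟨ha, hb⟩
    have hsrc : ((a, b) : ℝ × ℝ) ∈ polarCoord.source := Or.inl ha
    refine ⟨(polarCoord (a, b)).1, (polarCoord (a, b)).2, ⟨?_, ?_, ?_⟩, ?_⟩
    · simp only [polarCoord_apply]
      positivity
    · simp only [polarCoord_apply]
      have him : (Complex.equivRealProd.symm (a, b)).im = b := by
        simp [Complex.equivRealProd]
      have hre : (Complex.equivRealProd.symm (a, b)).re = a := by
        simp [Complex.equivRealProd]
      have h0 : 0 ≤ Complex.arg (Complex.equivRealProd.symm (a, b)) :=
        Complex.arg_nonneg_iff.mpr (by rw [him]; exact hb.le)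
      refine lt_of_le_of_ne h0 (fun h => ?_)
      have := Complex.arg_eq_zero_iff.mp h.symm
      rw [him] at this
      exact hb.ne' this.2
    · simp only [polarCoord_apply]
      refine Complex.arg_lt_pi_div_two_iff.mpr (Or.inl ?_)
      simp [Complex.equivRealProd, ha]
    · exact polarCoord.left_inv hsrc
  · rintro ⟨r, θ, ⟨hr, hθ1, hθ2⟩, heq⟩
    have hc : 0 < Real.cos θ := Real.cos_pos_of_mem_Ioo ⟨by linarith [pi_pos], hθ2⟩
    have hs : 0 < Real.sin θ := Real.sin_pos_of_pos_of_lt_pi hθ1 (by linarith [pi_pos])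
    rw [polarCoord_symm_apply] at heq
    have h1 : r * Real.cos θ = a := congrArg Prod.fst heq
    have h2 : r * Real.sin θ = b := congrArg Prod.snd heq
    exact ⟨h1 ▸ mul_pos hr hc, h2 ▸ mul_pos hr hs⟩

theorem polar_integral_identity {E : Type*} [NormedAddCommGroup E] [InnerProductSpace ℝ E]
    [FiniteDimensional ℝ E]
    (S : ℕ) (hS : 1 ≤ S) (x y : E) (hx : ‖x‖ = 1) (hy : ‖y‖ = 1) (hxy : x ≠ -y) :
    (∫⁻ l in Set.Ioi (0 : ℝ), ∫⁻ m in Set.Ioi (0 : ℝ),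
        ENNReal.ofReal (l ^ (S - 1) * m ^ (S - 1) * Real.exp (-‖l • x + m • y‖ ^ 2 / 2)))
      = ENNReal.ofReal ((2 : ℝ) ^ (S - 1) * Real.Gamma (S : ℝ)) *
        ∫⁻ θ in Set.Ioc (0 : ℝ) (π / 2),
          ENNReal.ofReal ((Real.cos θ * Real.sin θ) ^ (S - 1) /
            ‖Real.cos θ • x + Real.sin θ • y‖ ^ (2 * S)) := by
  have hnorm : ∀ θ : ℝ, 0 ≤ Real.cos θ → 0 ≤ Real.sin θ →
      Real.cos θ • x + Real.sin θ • y ≠ 0 := aux_norm_ne_zero x y hx hy hxy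
  have key : ∀ θ ∈ Ioo (0:ℝ) (π/2),
      (∫⁻ r in Ioi (0:ℝ), ENNReal.ofReal (r * ((r * Real.cos θ) ^ (S-1) * (r * Real.sin θ) ^ (S-1) *
          Real.exp (-‖(r * Real.cos θ) • x + (r * Real.sin θ) • y‖^2/2))))
        = ENNReal.ofReal ((2:ℝ)^(S-1) * Real.Gamma S) *
          ENNReal.ofReal ((Real.cos θ * Real.sin θ)^(S-1) /
            ‖Real.cos θ • x + Real.sin θ • y‖ ^ (2*S)) := by
    intro θ hθ
    have hc : 0 < Real.cos θ := Real.cos_pos_of_mem_Ioo ⟨by linarith [pi_pos, hθ.1], hθ.2⟩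
    have hsn : 0 < Real.sin θ := Real.sin_pos_of_pos_of_lt_pi hθ.1 (by linarith [pi_pos, hθ.2])
    exact aux_key S hS x y θ hc hsn (hnorm θ hc.le hsn.le)
  set f : ℝ × ℝ → ENNReal := fun p =>
    ENNReal.ofReal (p.1 ^ (S - 1) * p.2 ^ (S - 1) * Real.exp (-‖p.1 • x + p.2 • y‖ ^ 2 / 2))
    with hfdef
  have hcont : Continuous fun p : ℝ × ℝ =>
      p.1 ^ (S - 1) * p.2 ^ (S - 1) * Real.exp (-‖p.1 • x + p.2 • y‖ ^ 2 / 2) := by fun_prop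
  have hfc : Continuous f := ENNReal.continuous_ofReal.comp hcont
  have hcont2 : Continuous fun p : ℝ × ℝ =>
      p.1 * ((p.1 * Real.cos p.2) ^ (S-1) * (p.1 * Real.sin p.2) ^ (S-1) *
        Real.exp (-‖(p.1 * Real.cos p.2) • x + (p.1 * Real.sin p.2) • y‖^2/2)) := by fun_prop
  set s2 : Set (ℝ × ℝ) := Ioi (0:ℝ) ×ˢ Ioo (0:ℝ) (π/2) with hs2def
  have hs2 : MeasurableSet s2 := measurableSet_Ioi.prod measurableSet_Ioo
  -- Step 1: Tonelli
  have step1 : (∫⁻ l in Set.Ioi (0 : ℝ), ∫⁻ m in Set.Ioi (0 : ℝ),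
        ENNReal.ofReal (l ^ (S - 1) * m ^ (S - 1) * Real.exp (-‖l • x + m • y‖ ^ 2 / 2)))
      = ∫⁻ p in Ioi (0:ℝ) ×ˢ Ioi (0:ℝ), f p := by
    rw [lintegral_lintegral (f := fun l m => f (l, m))
      (hfc.measurable.comp measurable_id).aemeasurable, Measure.prod_restrict,
      ← Measure.volume_eq_prod]
  -- Step 2: image
  have himage : Ioi (0:ℝ) ×ˢ Ioi (0:ℝ) = polarCoord.symm '' s2 := aux_image
  -- Step 3: Jacobian
  set B : ℝ × ℝ → ℝ × ℝ →L[ℝ] ℝ × ℝ := fun p =>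
    LinearMap.toContinuousLinearMap (Matrix.toLin (Module.Basis.finTwoProd ℝ) (Module.Basis.finTwoProd ℝ)
      !![Real.cos p.2, -p.1 * Real.sin p.2; Real.sin p.2, p.1 * Real.cos p.2]) with hBdef
  have hBdet : ∀ p, (B p).det = p.1 := by
    intro p
    conv_rhs => rw [← one_mul p.1, ← Real.cos_sq_add_sin_sq p.2]
    simp only [hBdef, neg_mul, LinearMap.det_toContinuousLinearMap, LinearMap.det_toLin,
      Matrix.det_fin_two_of, sub_neg_eq_add]
    ring
  have step3 : ∫⁻ p in polarCoord.symm '' s2, f p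
      = ∫⁻ p in s2, ENNReal.ofReal |(B p).det| * f (polarCoord.symm p) :=
    lintegral_image_eq_lintegral_abs_det_fderiv_mul volume hs2
      (fun p _ => (hasFDerivAt_polarCoord_symm p).hasFDerivWithinAt)
      (polarCoord.symm.injOn.mono (by
        rw [hs2def, polarCoord.symm_source, polarCoord_target]
        exact prod_mono_right (Ioo_subset_Ioo (by linarith [pi_pos]) (by linarith [pi_pos]))))
      f
  -- Step 4: simplify integrand on s2
  have step4 : ∫⁻ p in s2, ENNReal.ofReal |(B p).det| * f (polarCoord.symm p)
      = ∫⁻ p in s2, ENNReal.ofReal (p.1 * ((p.1 * Real.cos p.2) ^ (S-1) *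
          (p.1 * Real.sin p.2) ^ (S-1) *
          Real.exp (-‖(p.1 * Real.cos p.2) • x + (p.1 * Real.sin p.2) • y‖^2/2))) := by
    refine setLIntegral_congr_fun hs2 (fun p hp => ?_)
    rw [hBdet, abs_of_pos hp.1]
    simp only [hfdef, polarCoord_symm_apply]
    rw [← ENNReal.ofReal_mul (le_of_lt hp.1)]
  -- Step 5: Tonelli back
  have step5 : ∫⁻ p in s2, ENNReal.ofReal (p.1 * ((p.1 * Real.cos p.2) ^ (S-1) *
          (p.1 * Real.sin p.2) ^ (S-1) *
          Real.exp (-‖(p.1 * Real.cos p.2) • x + (p.1 * Real.sin p.2) • y‖^2/2)))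
      = ∫⁻ θ in Ioo (0:ℝ) (π/2), ∫⁻ r in Ioi (0:ℝ),
          ENNReal.ofReal (r * ((r * Real.cos θ) ^ (S-1) * (r * Real.sin θ) ^ (S-1) *
            Real.exp (-‖(r * Real.cos θ) • x + (r * Real.sin θ) • y‖^2/2))) := by
    rw [hs2def, Measure.volume_eq_prod, ← Measure.prod_restrict]
    exact lintegral_prod_symm _
      ((ENNReal.continuous_ofReal.comp hcont2).measurable.comp measurable_id).aemeasurable
  rw [step1, himage, step3, step4, step5]
  rw [setLIntegral_congr_fun measurableSet_Ioo key]
  rw [lintegral_const_mul' _ _ ENNReal.ofReal_ne_top]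
  rw [setLIntegral_congr Ioo_ae_eq_Ioc]
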